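/- In the secure scalar product protocol, if r_A = Dec(w·Enc(-r_B)) where w = ∏ Enc(xᵢ)^{yᵢ}, then r_A + r_B = ∑ xᵢyᵢ, i.e., the two parties' outputs sum to the true scalar product. -/

import Mathlib

theorem stmt_8 {P C : Type*} [AddCommGroup P] [CommMonoid C]
    (Enc : P → C) (Dec : C → P)
    (hDecEnc : ∀ a : P, Dec (Enc a) = a)
    (hDec_mul : ∀ u v : C, Dec (u * v) = Dec u + Dec v)
    (hDec_pow : ∀ (u : C) (k : ℕ), Dec (u ^ k) = k • Dec u)
    {n : ℕ} (x : Fin n → P) (y : Fin n → ℕ) (rB : P)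
    (w : C) (hw : w = ∏ i, Enc (x i) ^ (y i))
    (rA : P) (hrA : rA = Dec (w * Enc (-rB))) :
    rA + rB = ∑ i, y i • x i := by
  have hone : Dec 1 = 0 := by
    have := hDec_mul 1 1
    rw [one_mul] at this
    exact right_eq_add.mp this
  have hprod : ∀ (s : Finset (Fin n)), Dec (∏ i ∈ s, Enc (x i) ^ (y i))
      = ∑ i ∈ s, y i • x i := by
    intro s
    induction s using Finset.induction_on with
    | empty => simpa using hone
    | insert a s hns ih =>
      rw [Finset.prod_insert hns, Finset.sum_insert hns, hDec_mul, ih,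
        hDec_pow, hDecEnc]
  rw [hrA, hw, hDec_mul, hprod, hDecEnc]
  abel
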